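/- (Solution of the homogeneous equation, case k ≠ 2.) Let k be an integer with 0 ≤ k ≤ n and k ≠ 2. A differentiable function f : U → ℝ satisfies f'(u)·g(u) + (k−1)·f(u)·g'(u) + (2−k)·f(u) = 0 for all u ∈ U if and only if there exists a constant b ∈ ℝ such that f(u) = b·((n−1)/(n−2))^{k−1}·(F'(u))^{k−1}·|F(u)|^{(k−n)/(n−2)} for all u ∈ U. -/

import Mathlib

/-- The function `g = ((n−2)F)/((n−1)F')`. -/
noncomputable def gFun (n : ℕ) (F : ℝ → ℝ) (u : ℝ) : ℝ :=
  (((n : ℝ) - 2) * F u) / (((n : ℝ) - 1) * deriv F u)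


theorem abs_rpow_deriv {F : ℝ → ℝ} {d : ℝ} (r : ℝ) {u : ℝ}
    (hF : HasDerivAt F d u) (hne : F u ≠ 0) :
    HasDerivAt (fun x => |F x| ^ r) (|F u| ^ r * (r * d / F u)) u := by
  rcases hne.lt_or_gt with hneg | hpos
  · have hev : ∀ᶠ x in nhds u, |F x| = -F x := by
      have h1 : ∀ᶠ x in nhds u, F x < 0 :=
        hF.continuousAt.preimage_mem_nhds (Iio_mem_nhds hneg)
      filter_upwards [h1] with x hx using abs_of_neg hx
    have h1 : HasDerivAt (fun x => (-F x) ^ r) (-d * r * (-F u) ^ (r - 1)) u :=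
      hF.neg.rpow_const (Or.inl (neg_ne_zero.2 hne))
    have h2 : HasDerivAt (fun x => |F x| ^ r) (-d * r * (-F u) ^ (r - 1)) u :=
      h1.congr_of_eventuallyEq (by filter_upwards [hev] with x hx; rw [hx])
    convert h2 using 1
    rw [Real.rpow_sub_one (neg_ne_zero.2 hne), abs_of_neg hneg]
    field_simp
  · have hev : ∀ᶠ x in nhds u, |F x| = F x := by
      have h1 : ∀ᶠ x in nhds u, 0 < F x :=
        hF.continuousAt.preimage_mem_nhds (Ioi_mem_nhds hpos)
      filter_upwards [h1] with x hx using abs_of_pos hx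
    have h1 : HasDerivAt (fun x => (F x) ^ r) (d * r * (F u) ^ (r - 1)) u :=
      hF.rpow_const (Or.inl hne)
    have h2 : HasDerivAt (fun x => |F x| ^ r) (d * r * (F u) ^ (r - 1)) u :=
      h1.congr_of_eventuallyEq (by filter_upwards [hev] with x hx; rw [hx])
    convert h2 using 1
    rw [Real.rpow_sub_one hne, abs_of_pos hpos]
    field_simp

theorem phi_deriv {F G : ℝ → ℝ} {d e : ℝ} (m : ℤ) (r : ℝ) {u : ℝ}
    (hF : HasDerivAt F d u) (hG : HasDerivAt G e u)
    (hFne : F u ≠ 0) (hGne : G u ≠ 0) :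
    HasDerivAt (fun x => G x ^ m * |F x| ^ r)
      (G u ^ m * |F u| ^ r * ((m : ℝ) * e / G u + r * d / F u)) u := by
  have h1 : HasDerivAt (fun x => G x ^ m) ((m : ℝ) * G u ^ (m - 1) * e) u := by
    have := (hasDerivAt_zpow m (G u) (Or.inl hGne)).comp u hG
    exact this.congr_deriv (by ring)
  have h2 := abs_rpow_deriv r hF hFne
  have h3 := h1.mul h2
  refine h3.congr_deriv ?_
  rw [zpow_sub_one₀ hGne]
  field_simp

theorem gFun_hasDerivAt (n : ℕ) {F : ℝ → ℝ} {u : ℝ}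
    (hF : DifferentiableAt ℝ F u) (hF2 : DifferentiableAt ℝ (deriv F) u)
    (hG : deriv F u ≠ 0) (h1 : ((n : ℝ) - 1) ≠ 0) :
    HasDerivAt (gFun n F)
      ((((n : ℝ) - 2) * (deriv F u * deriv F u - F u * deriv (deriv F) u)) /
        (((n : ℝ) - 1) * (deriv F u) ^ 2)) u := by
  have h1' : HasDerivAt (fun x => ((n : ℝ) - 2) * F x) (((n : ℝ) - 2) * deriv F u) u :=
    hF.hasDerivAt.const_mul _
  have h2' : HasDerivAt (fun x => ((n : ℝ) - 1) * deriv F x)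
      (((n : ℝ) - 1) * deriv (deriv F) u) u := hF2.hasDerivAt.const_mul _
  have hne : ((n : ℝ) - 1) * deriv F u ≠ 0 := mul_ne_zero h1 hG
  have h3 := h1'.div h2' hne
  have hfun : gFun n F = fun x => (((n : ℝ) - 2) * F x) / (((n : ℝ) - 1) * deriv F x) := rfl
  rw [hfun]
  refine h3.congr_deriv ?_
  field_simp

theorem stmt13 (n : ℕ) (hn : 4 ≤ n)
    (U : Set ℝ) (hU : IsOpen U) (hUc : U.OrdConnected)
    (F : ℝ → ℝ)
    (hF₁ : ∀ u ∈ U, DifferentiableAt ℝ F u)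
    (hF₂ : ∀ u ∈ U, DifferentiableAt ℝ (deriv F) u)
    (hFne : ∀ u ∈ U, F u ≠ 0)
    (hF'pos : ∀ u ∈ U, 0 < deriv F u)
    (k : ℕ) (hk : k ≤ n) (hk2 : k ≠ 2)
    (f : ℝ → ℝ) (hf : ∀ u ∈ U, DifferentiableAt ℝ f u) :
    (∀ u ∈ U,
      deriv f u * gFun n F u + ((k : ℝ) - 1) * f u * deriv (gFun n F) u
        + (2 - (k : ℝ)) * f u = 0) ↔
    ∃ b : ℝ, ∀ u ∈ U,
      f u = b * (((n : ℝ) - 1) / ((n : ℝ) - 2)) ^ ((k : ℤ) - 1)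
        * (deriv F u) ^ ((k : ℤ) - 1)
        * |F u| ^ ((((k : ℝ) - (n : ℝ)) / ((n : ℝ) - 2))) := by
  have hn4 : (4 : ℝ) ≤ (n : ℝ) := by exact_mod_cast hn
  have hn2 : ((n : ℝ) - 2) ≠ 0 := by linarith
  have hn1 : ((n : ℝ) - 1) ≠ 0 := by linarith
  set m : ℤ := (k : ℤ) - 1 with hm
  set r : ℝ := ((k : ℝ) - (n : ℝ)) / ((n : ℝ) - 2) with hr
  set c : ℝ := ((n : ℝ) - 1) / ((n : ℝ) - 2) with hc
  have hcne : c ≠ 0 := div_ne_zero hn1 hn2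
  constructor
  · intro hode
    rcases Set.eq_empty_or_nonempty U with hUe | ⟨u₀, hu₀⟩
    · exact ⟨0, fun u hu => absurd hu (hUe ▸ Set.notMem_empty u)⟩
    set h : ℝ → ℝ := fun x => f x * ((deriv F x) ^ (-m) * |F x| ^ (-r)) with hh
    have hder : ∀ u ∈ U, HasDerivAt h 0 u := by
      intro u hu
      have hGne : deriv F u ≠ 0 := (hF'pos u hu).ne'
      have hFneu := hFne u hu
      have hψ := phi_deriv (-m) (-r) (hF₁ u hu).hasDerivAt (hF₂ u hu).hasDerivAt hFneu hGne
      have h3 := (hf u hu).hasDerivAt.mul hψ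
      have E := hode u hu
      have hgval : gFun n F u = (((n : ℝ) - 2) * F u) / (((n : ℝ) - 1) * deriv F u) := rfl
      rw [hgval, (gFun_hasDerivAt n (hF₁ u hu) (hF₂ u hu) hGne hn1).deriv] at E
      refine h3.congr_deriv (Eq.symm ?_)
      have hPne : (deriv F u) ^ (-m) * |F u| ^ (-r) ≠ 0 :=
        mul_ne_zero (zpow_ne_zero _ hGne)
          (Real.rpow_pos_of_pos (abs_pos.2 hFneu) _).ne'
      set A := deriv f u with hA
      set B := f u with hB
      set G := deriv F u with hG
      set e := deriv (deriv F) u with he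
      have hmc : ((-m : ℤ) : ℝ) = 1 - (k : ℝ) := by push_cast [hm]; ring
      have hX : A + B * (((-m : ℤ) : ℝ) * e / G + (-r) * G / F u) = 0 := by
        rw [hmc, hr]
        linear_combination (norm := (field_simp; ring)) ((((n:ℝ)-1)*G)/(((n:ℝ)-2)*F u)) * E
      set P := G ^ (-m) * |F u| ^ (-r) with hP
      linear_combination (-P) * hX
    have hconv : Convex ℝ U := hUc.convex
    have hdiff : DifferentiableOn ℝ h U := fun x hx =>
      ((hder x hx).differentiableAt).differentiableWithinAt
    have hfd : ∀ x ∈ U, fderivWithin ℝ h U x = 0 := fun x hx => by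
      rw [fderivWithin_of_isOpen hU hx, ((hder x hx).hasFDerivAt).fderiv]
      ext y
      simp
    have hconst : ∀ u ∈ U, h u = h u₀ := fun u hu =>
      hconv.is_const_of_fderivWithin_eq_zero hdiff hfd hu hu₀
    refine ⟨h u₀ / c ^ m, fun u hu => ?_⟩
    have hGne : deriv F u ≠ 0 := (hF'pos u hu).ne'
    have hFneu := hFne u hu
    rw [div_mul_cancel₀ _ (zpow_ne_zero _ hcne), ← hconst u hu]
    simp only [hh]
    rw [zpow_neg, Real.rpow_neg (abs_nonneg _)]
    field_simp
  · rintro ⟨b, hb⟩ u hu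
    have hGne : deriv F u ≠ 0 := (hF'pos u hu).ne'
    have hFneu := hFne u hu
    have hφ : HasDerivAt (fun x => b * c ^ m * ((deriv F x) ^ m * |F x| ^ r))
        (b * c ^ m * ((deriv F u) ^ m * |F u| ^ r *
          ((m : ℝ) * deriv (deriv F) u / deriv F u + r * deriv F u / F u))) u :=
      (phi_deriv m r (hF₁ u hu).hasDerivAt (hF₂ u hu).hasDerivAt hFneu hGne).const_mul _
    have hev : f =ᶠ[nhds u] fun x => b * c ^ m * ((deriv F x) ^ m * |F x| ^ r) := by
      filter_upwards [hU.mem_nhds hu] with x hx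
      rw [hb x hx]; ring
    have hdf : deriv f u = b * c ^ m * ((deriv F u) ^ m * |F u| ^ r *
        ((m : ℝ) * deriv (deriv F) u / deriv F u + r * deriv F u / F u)) := by
      rw [hev.deriv_eq, hφ.deriv]
    have hgval : gFun n F u = (((n : ℝ) - 2) * F u) / (((n : ℝ) - 1) * deriv F u) := rfl
    rw [hdf, hb u hu, hgval,
      (gFun_hasDerivAt n (hF₁ u hu) (hF₂ u hu) hGne hn1).deriv]
    have hmc : ((m : ℤ) : ℝ) = (k : ℝ) - 1 := by push_cast [hm]; ring
    rw [hmc, hr]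
    field_simp
    ring
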